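/- arXiv:1611.02901 — 8 statements merged into one kernel-verified Lean document; each statement's English description precedes it below -/
import Mathlib

section
/- Let e ≥ 1 and let b : Fin e → B, w : Fin e → W be the incidence maps of a finite connected bipartite graph. Let (σ₁, τ₁) and (σ₂, τ₂) be two pairs in the set F of admissible permutation pairs. Then there exists a permutation η of Fin e with η σ₁ η⁻¹ = σ₂ and η τ₁ η⁻¹ = τ₂ if and only if there exists a bipartite graph automorphism (β, ω, π) with π σ₁ π⁻¹ = σ₂ and π τ₁ π⁻¹ = τ₂. (In other words, two pairs in F define isomorphic dessins d'enfants if and only if they lie in the same orbit of the bipartite graph automorphism group.) -/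
/-- `(σ, τ)` is an admissible pair for the bipartite graph with incidence maps `b` and `w`:
the orbits of `σ` are exactly the fibers of `b` and the orbits of `τ` are exactly the
fibers of `w`. -/
def IsAdmissiblePair {e : ℕ} {B W : Type*} (b : Fin e → B) (w : Fin e → W)
    (σ τ : Equiv.Perm (Fin e)) : Prop :=
  (∀ k k' : Fin e, (∃ n : ℤ, (σ ^ n) k = k') ↔ b k = b k') ∧
  (∀ k k' : Fin e, (∃ n : ℤ, (τ ^ n) k = k') ↔ w k = w k')


lemma descend_aux {e : ℕ} {B : Type*} [Fintype B] (b : Fin e → B)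
    (hb : Function.Surjective b) (η : Equiv.Perm (Fin e))
    (key : ∀ k k' : Fin e, b k = b k' ↔ b (η k) = b (η k')) :
    ∃ β : B ≃ B, b ∘ η = ⇑β ∘ b := by
  set F : B → B := fun x => b (η (Function.surjInv hb x)) with hF
  have hcomm : ∀ k, F (b k) = b (η k) := by
    intro k
    exact ((key _ _).mp (Function.surjInv_eq hb (b k))).symm ▸ rfl
  have hinj : Function.Injective F := by
    intro x y hxy
    obtain ⟨k, rfl⟩ := hb x
    obtain ⟨k', rfl⟩ := hb y
    rw [hcomm, hcomm] at hxy
    exact (key _ _).mpr hxy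
  refine ⟨Equiv.ofBijective F ((Finite.injective_iff_bijective).mp hinj), ?_⟩
  funext k
  exact (hcomm k).symm

lemma key_aux {e : ℕ} {B : Type*} (b : Fin e → B) (η σ₁ σ₂ : Equiv.Perm (Fin e))
    (hσ : η * σ₁ * η⁻¹ = σ₂)
    (ha1 : ∀ k k' : Fin e, (∃ n : ℤ, (σ₁ ^ n) k = k') ↔ b k = b k')
    (ha2 : ∀ k k' : Fin e, (∃ n : ℤ, (σ₂ ^ n) k = k') ↔ b k = b k') :
    ∀ k k' : Fin e, b k = b k' ↔ b (η k) = b (η k') := by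
  intro k k'
  rw [← ha1, ← ha2]
  have hz : ∀ n : ℤ, σ₂ ^ n = η * σ₁ ^ n * η⁻¹ := by
    intro n; rw [← hσ, conj_zpow]
  constructor
  · rintro ⟨n, hn⟩
    refine ⟨n, ?_⟩
    rw [hz]
    simp [Equiv.Perm.mul_apply, hn]
  · rintro ⟨n, hn⟩
    rw [hz] at hn
    simp only [Equiv.Perm.mul_apply, Equiv.Perm.inv_def, Equiv.symm_apply_apply] at hn
    exact ⟨n, η.injective hn⟩

theorem stmt0 {e : ℕ} (he : 1 ≤ e) {B W : Type*} [Fintype B] [Fintype W]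
    (b : Fin e → B) (w : Fin e → W) (hb : Function.Surjective b) (hw : Function.Surjective w)
    (hconn : ∀ k k' : Fin e,
      Relation.EqvGen (fun k k' => b k = b k' ∨ w k = w k') k k')
    (σ₁ τ₁ σ₂ τ₂ : Equiv.Perm (Fin e))
    (h1 : IsAdmissiblePair b w σ₁ τ₁) (h2 : IsAdmissiblePair b w σ₂ τ₂) :
    (∃ η : Equiv.Perm (Fin e), η * σ₁ * η⁻¹ = σ₂ ∧ η * τ₁ * η⁻¹ = τ₂) ↔
      (∃ (β : B ≃ B) (ω : W ≃ W) (π : Equiv.Perm (Fin e)),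
        b ∘ π = β ∘ b ∧ w ∘ π = ω ∘ w ∧ π * σ₁ * π⁻¹ = σ₂ ∧ π * τ₁ * π⁻¹ = τ₂) := by
  constructor
  · rintro ⟨η, hσ, hτ⟩
    obtain ⟨β, hβ⟩ := descend_aux b hb η (key_aux b η σ₁ σ₂ hσ h1.1 h2.1)
    obtain ⟨ω, hω⟩ := descend_aux w hw η (key_aux w η τ₁ τ₂ hτ h1.2 h2.2)
    exact ⟨β, ω, η, hβ, hω, hσ, hτ⟩
  · rintro ⟨β, ω, π, -, -, hσ, hτ⟩
    exact ⟨π, hσ, hτ⟩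
end

section
/- Let e ≥ 1 and let b : Fin e → B, w : Fin e → W be the incidence maps of a finite connected bipartite graph whose only bipartite graph automorphism is the identity triple. Then distinct pairs in the set F of admissible permutation pairs are never simultaneously conjugate: if (σ₁, τ₁) ≠ (σ₂, τ₂) are in F, then no permutation η of Fin e satisfies η σ₁ η⁻¹ = σ₂ and η τ₁ η⁻¹ = τ₂. Consequently, the number of isomorphism classes of dessins d'enfants admitting this bipartite graph equals the cardinality of F, namely the product over all black vertices v of (|b⁻¹(v)| − 1)! times the product over all white vertices u of (|w⁻¹(u)| − 1)!. -/
open Equiv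

lemma card_equiv_fixed {n' : ℕ} {α : Type*} [Finite α]
    (hcard : Nat.card α = n' + 1) (a₀ : α) :
    Nat.card {f : Fin (n' + 1) ≃ α // f 0 = a₀} = n'.factorial := by
  classical
  cases nonempty_fintype α
  have hc : Fintype.card α = n' + 1 := by rwa [Nat.card_eq_fintype_card] at hcard
  have E : (Fin (n' + 1) ≃ α) ≃ α × {f : Fin (n' + 1) ≃ α // f 0 = a₀} :=
  { toFun := fun f => ⟨f 0, ⟨f.trans (Equiv.swap (f 0) a₀), by simp⟩⟩
    invFun := fun p => p.2.val.trans (Equiv.swap a₀ p.1)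
    left_inv := fun f => by
      ext i
      simp [Equiv.swap_comm (f 0) a₀]
    right_inv := fun p => by
      obtain ⟨x, g, hg⟩ := p
      have h0 : (g.trans (Equiv.swap a₀ x)) 0 = x := by simp [hg]
      refine Prod.ext h0 (Subtype.ext ?_)
      ext i
      simp [hg, Equiv.swap_comm a₀ x] }
  have h1 : Nat.card (Fin (n' + 1) ≃ α) = (n' + 1).factorial := by
    rw [Nat.card_eq_fintype_card, Fintype.card_equiv (Fintype.equivFinOfCardEq hc).symm,
      Fintype.card_fin]
  have h2 := Nat.card_congr E
  rw [h1, Nat.card_prod, hcard] at h2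
  have h3 : (n' + 1) * n'.factorial = (n' + 1) * Nat.card {f : Fin (n' + 1) ≃ α // f 0 = a₀} := by
    rw [← Nat.factorial_succ]; exact h2
  exact Nat.eq_of_mul_eq_mul_left (Nat.succ_pos n') h3.symm

open Fin.NatCast in
lemma card_transitive {α : Type*} [Finite α] [Nonempty α] :
    Nat.card {σ : Equiv.Perm α // ∀ x y : α, ∃ m : ℤ, (σ ^ m) x = y}
      = (Nat.card α - 1).factorial := by
  classical
  cases nonempty_fintype α
  obtain ⟨a₀⟩ := ‹Nonempty α›
  obtain ⟨n', hn⟩ : ∃ n', Nat.card α = n' + 1 :=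
    ⟨Nat.card α - 1, (Nat.succ_pred_eq_of_pos Nat.card_pos).symm⟩
  have hc : Fintype.card α = n' + 1 := by rwa [Nat.card_eq_fintype_card] at hn
  rw [hn, Nat.add_sub_cancel, ← card_equiv_fixed hn a₀]
  -- `σ ^ d` is the identity as soon as it fixes `a₀`, for transitive `σ`
  have key_fix : ∀ σ : Equiv.Perm α, (∀ x y : α, ∃ m : ℤ, (σ ^ m) x = y) →
      ∀ d : ℕ, (σ ^ d) a₀ = a₀ → σ ^ d = 1 := by
    intro σ hσ d hd
    ext x
    obtain ⟨m, hm⟩ := hσ a₀ x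
    have hcomm : (σ ^ d) ((σ ^ m) a₀) = (σ ^ m) ((σ ^ d) a₀) := by
      rw [← Equiv.Perm.mul_apply, ← Equiv.Perm.mul_apply, ← zpow_natCast,
        ← zpow_add, ← zpow_add, add_comm]
    simp only [← hm, hcomm, hd, Equiv.Perm.one_apply]
  -- if a positive power fixes `a₀`, the exponent is at least the cardinality
  have key_ge : ∀ σ : Equiv.Perm α, (∀ x y : α, ∃ m : ℤ, (σ ^ m) x = y) →
      ∀ d : ℕ, 0 < d → (σ ^ d) a₀ = a₀ → n' + 1 ≤ d := by
    intro σ hσ d hd hfix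
    have h1 : σ ^ d = 1 := key_fix σ hσ d hfix
    have hsurj : Function.Surjective (fun k : Fin d => (σ ^ (k : ℕ)) a₀) := by
      intro x
      obtain ⟨m, hm⟩ := hσ a₀ x
      have hd' : (0 : ℤ) < (d : ℤ) := by exact_mod_cast hd
      have h2 : 0 ≤ m % d := Int.emod_nonneg m (by positivity)
      have h3 : m % d < d := Int.emod_lt_of_pos m hd'
      refine ⟨⟨(m % d).toNat, by omega⟩, ?_⟩
      have h4 : σ ^ (((m % (d : ℤ)).toNat : ℕ)) = σ ^ m := by
        rw [← zpow_natCast, Int.toNat_of_nonneg h2]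
        conv_rhs => rw [← Int.mul_ediv_add_emod m (d : ℤ)]
        rw [zpow_add, zpow_mul, zpow_natCast, h1, one_zpow, one_mul]
      simpa [h4] using hm
    have := Nat.card_le_card_of_surjective _ hsurj
    simpa [hn, hc] using this
  -- the orbit map is bijective
  have key_bij : ∀ σ : Equiv.Perm α, (∀ x y : α, ∃ m : ℤ, (σ ^ m) x = y) →
      Function.Bijective (fun i : Fin (n' + 1) => (σ ^ (i : ℕ)) a₀) := by
    intro σ hσ
    rw [Fintype.bijective_iff_injective_and_card]
    refine ⟨?_, by simp [hc]⟩
    have aux : ∀ i j : Fin (n' + 1), (i : ℕ) ≤ (j : ℕ) →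
        (σ ^ (i : ℕ)) a₀ = (σ ^ (j : ℕ)) a₀ → i = j := by
      intro i j hij hEq
      set d := (j : ℕ) - (i : ℕ) with hd
      have h1 : (σ ^ (i : ℕ)) ((σ ^ d) a₀) = (σ ^ (i : ℕ)) a₀ := by
        rw [← Equiv.Perm.mul_apply, ← pow_add]
        rw [show (i : ℕ) + d = (j : ℕ) by omega]
        exact hEq.symm
      have h2 : (σ ^ d) a₀ = a₀ := (σ ^ (i : ℕ)).injective h1
      rcases Nat.eq_zero_or_pos d with h | h
      · exact Fin.ext (by omega)
      · have := key_ge σ hσ d h h2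
        have : (j : ℕ) < n' + 1 := j.isLt
        omega
    intro i j hEq
    rcases le_total (i : ℕ) (j : ℕ) with h | h
    · exact aux i j h hEq
    · exact (aux j i h hEq.symm).symm
  have key_per : ∀ σ : Equiv.Perm α, (∀ x y : α, ∃ m : ℤ, (σ ^ m) x = y) →
      σ ^ (n' + 1) = 1 := by
    intro σ hσ
    obtain ⟨j, hj⟩ := (key_bij σ hσ).2 ((σ ^ (n' + 1)) a₀)
    set d := (n' + 1) - (j : ℕ) with hd
    have hjlt : (j : ℕ) < n' + 1 := j.isLt
    have h1 : (σ ^ (j : ℕ)) ((σ ^ d) a₀) = (σ ^ (j : ℕ)) a₀ := by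
      rw [← Equiv.Perm.mul_apply, ← pow_add, show (j : ℕ) + d = n' + 1 by omega]
      exact hj.symm
    have h2 : (σ ^ d) a₀ = a₀ := (σ ^ (j : ℕ)).injective h1
    have hd0 : 0 < d := by omega
    have hge := key_ge σ hσ d hd0 h2
    have hj0 : (j : ℕ) = 0 := by omega
    have hfix : (σ ^ (n' + 1)) a₀ = a₀ := by
      have h5 := hj.symm
      simp only [hj0, pow_zero, Equiv.Perm.one_apply] at h5
      exact h5
    exact key_fix σ hσ _ hfix
  -- the two injections
  set rot := finRotate (n' + 1) with hrot
  have congr_pow : ∀ (f : Fin (n' + 1) ≃ α) (m : ℕ),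
      (f.permCongr rot) ^ m = f.permCongr (rot ^ m) := by
    intro f m
    induction m with
    | zero => simp [pow_zero, Equiv.Perm.one_def]
    | succ m ih =>
        rw [pow_succ, pow_succ, ih]
        ext x
        simp [Equiv.Perm.mul_apply]
  have rot_pow : ∀ (m : ℕ) (i : Fin (n' + 1)), (rot ^ m) i = i + (m : Fin (n' + 1)) := by
    intro m
    induction m with
    | zero => simp
    | succ m ih =>
        intro i
        rw [pow_succ', Equiv.Perm.mul_apply, ih, hrot, finRotate_succ_apply]
        push_cast
        rw [add_assoc]
  have hE : Function.Injective
      (fun s : {σ : Equiv.Perm α // ∀ x y : α, ∃ m : ℤ, (σ ^ m) x = y} =>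
        (⟨Equiv.ofBijective (fun i : Fin (n' + 1) => (s.val ^ (i : ℕ)) a₀)
          (key_bij s.val s.prop), by simp⟩ : {f : Fin (n' + 1) ≃ α // f 0 = a₀})) := by
    rintro ⟨σ, hσ⟩ ⟨σ', hσ'⟩ hEq
    have hEq' : ∀ i : Fin (n' + 1), (σ ^ (i : ℕ)) a₀ = (σ' ^ (i : ℕ)) a₀ := by
      intro i
      have h := Subtype.ext_iff.mp hEq
      have h2 := Equiv.ext_iff.mp h i
      simpa using h2
    have hall : ∀ m : ℕ, (σ ^ m) a₀ = (σ' ^ m) a₀ := by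
      intro m
      have h1 : σ ^ m = σ ^ (m % (n' + 1)) := by
        conv_lhs => rw [← Nat.div_add_mod m (n' + 1)]
        rw [pow_add, pow_mul, key_per σ hσ, one_pow, one_mul]
      have h2 : σ' ^ m = σ' ^ (m % (n' + 1)) := by
        conv_lhs => rw [← Nat.div_add_mod m (n' + 1)]
        rw [pow_add, pow_mul, key_per σ' hσ', one_pow, one_mul]
      rw [h1, h2]
      exact hEq' ⟨m % (n' + 1), Nat.mod_lt _ (Nat.succ_pos _)⟩
    have hss : σ = σ' := by
      ext x
      obtain ⟨i, hi⟩ := (key_bij σ hσ).2 x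
      have hi' : (σ ^ (i : ℕ)) a₀ = x := hi
      have hx' : (σ' ^ (i : ℕ)) a₀ = x := by rw [← hall]; exact hi'
      calc σ x = (σ ^ ((i : ℕ) + 1)) a₀ := by
            rw [pow_succ', Equiv.Perm.mul_apply, hi']
        _ = (σ' ^ ((i : ℕ) + 1)) a₀ := hall _
        _ = σ' x := by rw [pow_succ', Equiv.Perm.mul_apply, hx']
    exact Subtype.ext hss
  have hΨ : Function.Injective
      (fun s : {f : Fin (n' + 1) ≃ α // f 0 = a₀} =>
        (⟨s.val.permCongr rot, by
          intro x y
          refine ⟨((s.val.symm y - s.val.symm x : Fin (n' + 1)) : ℕ), ?_⟩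
          rw [zpow_natCast, congr_pow]
          simp [rot_pow, Fin.cast_val_eq_self, sub_add_cancel, add_comm]⟩ :
            {σ : Equiv.Perm α // ∀ x y : α, ∃ m : ℤ, (σ ^ m) x = y})) := by
    rintro ⟨f, hf⟩ ⟨g, hg⟩ hEq
    have hEq' : f.permCongr rot = g.permCongr rot := Subtype.ext_iff.mp hEq
    have claim : ∀ (i : ℕ) (h : i < n' + 1), f ⟨i, h⟩ = g ⟨i, h⟩ := by
      intro i
      induction i with
      | zero =>
          intro h
          have h0 : (⟨0, h⟩ : Fin (n' + 1)) = 0 := rfl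
          rw [h0, hf, hg]
      | succ i ih =>
          intro h
          have hi : i < n' + 1 := Nat.lt_of_succ_lt h
          have hn1 : 1 % (n' + 1) = 1 := Nat.mod_eq_of_lt (by omega)
          have hadd : (⟨i, hi⟩ : Fin (n' + 1)) + 1 = ⟨i + 1, h⟩ := by
            apply Fin.ext
            simp only [Fin.add_def, Fin.val_one', hn1]
            exact Nat.mod_eq_of_lt h
          have h1 : f ⟨i + 1, h⟩ = (f.permCongr rot) (f ⟨i, hi⟩) := by
            rw [Equiv.permCongr_apply, Equiv.symm_apply_apply, hrot,
              finRotate_succ_apply, hadd]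
          have h2 : g ⟨i + 1, h⟩ = (g.permCongr rot) (g ⟨i, hi⟩) := by
            rw [Equiv.permCongr_apply, Equiv.symm_apply_apply, hrot,
              finRotate_succ_apply, hadd]
          rw [h1, h2, hEq', ih hi]
    refine Subtype.ext (Equiv.ext fun i => ?_)
    have := claim i.val i.isLt
    simpa [Fin.eta] using this
  exact le_antisymm (Nat.card_le_card_of_injective _ hE)
    (Nat.card_le_card_of_injective _ hΨ)

open MulAction in
lemma card_adm {α ι : Type*} [Finite α] [Fintype ι] (f : α → ι)
    (hf : Function.Surjective f) :
    Nat.card {σ : Equiv.Perm α // ∀ x y : α, (∃ m : ℤ, (σ ^ m) x = y) ↔ f x = f y}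
      = ∏ i : ι, (Nat.card {a : α // f a = i} - 1).factorial := by
  classical
  cases nonempty_fintype α
  set S := stabilizer (Equiv.Perm α)ᵈᵐᵃ f with hS
  set Φ := DomMulAct.stabilizerMulEquiv f with hΦ
  -- key computation for powers
  have pow_apply : ∀ (s : Sᵐᵒᵖ) (m : ℤ) (i : ι) (a : α) (h : f a = i),
      (((Φ s i) ^ m) ⟨a, h⟩ : {a : α // f a = i}).val
        = ((DomMulAct.mk.symm s.unop.val : Equiv.Perm α) ^ m) a := by
    intro s m i a h
    have h1 : (Φ s i) ^ m = (Φ (s ^ m)) i := by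
      rw [map_zpow]
      rfl
    rw [h1]
    rw [show ((Φ (s ^ m)) i ⟨a, h⟩ : α)
        = (DomMulAct.mk.symm ((s ^ m).unop.val) : Equiv.Perm α) a
      from DomMulAct.stabilizerMulEquiv_apply (f := f) (s ^ m) h]
    congr 1
  have E1 : {σ : Equiv.Perm α // ∀ x y : α, (∃ m : ℤ, (σ ^ m) x = y) ↔ f x = f y} ≃
      {s : Sᵐᵒᵖ // ∀ x y : α,
        (∃ m : ℤ, (((DomMulAct.mk.symm s.unop.val : Equiv.Perm α)) ^ m) x = y) ↔ f x = f y} :=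
  { toFun := fun ⟨σ, hσ⟩ => ⟨MulOpposite.op ⟨DomMulAct.mk σ, by
      rw [DomMulAct.mem_stabilizer_iff]
      funext a
      simp only [Function.comp_apply, Equiv.symm_apply_apply]
      exact ((hσ a (σ a)).mp ⟨1, by simp⟩).symm⟩, by simpa using hσ⟩
    invFun := fun ⟨s, hs⟩ => ⟨DomMulAct.mk.symm s.unop.val, hs⟩
    left_inv := fun ⟨σ, hσ⟩ => by simp
    right_inv := fun ⟨s, hs⟩ => by simp }
  have E2 : {s : Sᵐᵒᵖ // ∀ x y : α,
        (∃ m : ℤ, (((DomMulAct.mk.symm s.unop.val : Equiv.Perm α)) ^ m) x = y) ↔ f x = f y} ≃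
      {g : ∀ i : ι, Equiv.Perm {a : α // f a = i} //
        ∀ i, ∀ x y : {a : α // f a = i}, ∃ m : ℤ, ((g i) ^ m) x = y} := by
    refine Φ.toEquiv.subtypeEquiv fun s => ?_
    set σ := (DomMulAct.mk.symm s.unop.val : Equiv.Perm α) with hσdef
    have hstab : f ∘ σ = f := DomMulAct.mem_stabilizer_iff.mp s.unop.prop
    constructor
    · intro hs i x y
      obtain ⟨m, hm⟩ := (hs x.val y.val).mpr (x.prop.trans y.prop.symm)
      exact ⟨m, Subtype.ext ((pow_apply s m i x.val x.prop).trans hm)⟩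
    · intro hs x y
      constructor
      · rintro ⟨m, rfl⟩
        have : f ∘ (σ ^ m) = f := by
          have hm : (s.unop : (Equiv.Perm α)ᵈᵐᵃ) ^ m ∈ S := by
            rw [← SubgroupClass.coe_zpow]
            exact ((s.unop) ^ m).prop
          have := DomMulAct.mem_stabilizer_iff.mp hm
          rwa [DomMulAct.symm_mk_zpow] at this
        exact (congrFun this x).symm
      · intro hxy
        obtain ⟨m, hm⟩ := hs (f y) ⟨x, hxy⟩ ⟨y, rfl⟩
        have h3 := congrArg Subtype.val hm
        exact ⟨m, (pow_apply s m (f y) x hxy).symm.trans h3⟩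
  have E3 : {g : ∀ i : ι, Equiv.Perm {a : α // f a = i} //
        ∀ i, ∀ x y : {a : α // f a = i}, ∃ m : ℤ, ((g i) ^ m) x = y} ≃
      ∀ i : ι, {g : Equiv.Perm {a : α // f a = i} //
        ∀ x y : {a : α // f a = i}, ∃ m : ℤ, (g ^ m) x = y} :=
    Equiv.subtypePiEquivPi (p := fun (i : ι) (gi : Equiv.Perm {a : α // f a = i}) =>
      ∀ x y : {a : α // f a = i}, ∃ m : ℤ, (gi ^ m) x = y)
  rw [Nat.card_congr ((E1.trans E2).trans E3), Nat.card_pi]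
  refine Finset.prod_congr rfl fun i _ => ?_
  have : Nonempty {a : α // f a = i} := by
    obtain ⟨a, ha⟩ := hf i
    exact ⟨⟨a, ha⟩⟩
  exact card_transitive

theorem stmt2 {e : ℕ} (he : 1 ≤ e) {B W : Type*} [Fintype B] [Fintype W]
    (b : Fin e → B) (w : Fin e → W) (hb : Function.Surjective b) (hw : Function.Surjective w)
    (hconn : ∀ k k' : Fin e,
      Relation.EqvGen (fun k k' => b k = b k' ∨ w k = w k') k k')
    (htrivial : ∀ (β : B ≃ B) (ω : W ≃ W) (π : Equiv.Perm (Fin e)),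
      b ∘ π = β ∘ b → w ∘ π = ω ∘ w →
        β = Equiv.refl B ∧ ω = Equiv.refl W ∧ π = Equiv.refl (Fin e)) :
    (∀ σ₁ τ₁ σ₂ τ₂ : Equiv.Perm (Fin e), IsAdmissiblePair b w σ₁ τ₁ →
      IsAdmissiblePair b w σ₂ τ₂ → (σ₁, τ₁) ≠ (σ₂, τ₂) →
      ¬ ∃ η : Equiv.Perm (Fin e), η * σ₁ * η⁻¹ = σ₂ ∧ η * τ₁ * η⁻¹ = τ₂) ∧
    Nat.card (Quot (fun p q : {p : Equiv.Perm (Fin e) × Equiv.Perm (Fin e) //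
        IsAdmissiblePair b w p.1 p.2} =>
          ∃ η : Equiv.Perm (Fin e), η * p.val.1 * η⁻¹ = q.val.1 ∧ η * p.val.2 * η⁻¹ = q.val.2)) =
      Nat.card {p : Equiv.Perm (Fin e) × Equiv.Perm (Fin e) // IsAdmissiblePair b w p.1 p.2} ∧
    Nat.card {p : Equiv.Perm (Fin e) × Equiv.Perm (Fin e) // IsAdmissiblePair b w p.1 p.2} =
      (∏ v : B, Nat.factorial (Nat.card {k : Fin e // b k = v} - 1)) *
      (∏ u : W, Nat.factorial (Nat.card {k : Fin e // w k = u} - 1)) := by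
  classical
  have part1 : ∀ σ₁ τ₁ σ₂ τ₂ : Equiv.Perm (Fin e), IsAdmissiblePair b w σ₁ τ₁ →
      IsAdmissiblePair b w σ₂ τ₂ → (σ₁, τ₁) ≠ (σ₂, τ₂) →
      ¬ ∃ η : Equiv.Perm (Fin e), η * σ₁ * η⁻¹ = σ₂ ∧ η * τ₁ * η⁻¹ = τ₂ := by
    rintro σ₁ τ₁ σ₂ τ₂ h1 h2 hne ⟨η, hσ, hτ⟩
    have hconj : ∀ (ρ₁ ρ₂ : Equiv.Perm (Fin e)), η * ρ₁ * η⁻¹ = ρ₂ →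
        ∀ (m : ℤ) (x : Fin e), (ρ₂ ^ m) (η x) = η ((ρ₁ ^ m) x) := by
      rintro ρ₁ ρ₂ rfl m x
      rw [conj_zpow]
      simp [Equiv.Perm.mul_apply]
    have keyfib : ∀ (ρ₁ ρ₂ : Equiv.Perm (Fin e)) (f : Fin e → B ⊕ W),
        (∀ k k', (∃ m : ℤ, (ρ₁ ^ m) k = k') ↔ f k = f k') →
        (∀ k k', (∃ m : ℤ, (ρ₂ ^ m) k = k') ↔ f k = f k') →
        η * ρ₁ * η⁻¹ = ρ₂ →
        ∀ u v : Fin e, f (η u) = f (η v) ↔ f u = f v := by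
      intro ρ₁ ρ₂ f hf1 hf2 hconj' u v
      rw [← hf2 (η u) (η v), ← hf1 u v]
      constructor
      · rintro ⟨m, hm⟩
        refine ⟨m, η.injective ?_⟩
        rw [← hconj ρ₁ ρ₂ hconj' m u, hm]
      · rintro ⟨m, hm⟩
        exact ⟨m, by rw [hconj ρ₁ ρ₂ hconj' m u, hm]⟩
    have keyb : ∀ u v : Fin e, b (η u) = b (η v) ↔ b u = b v := by
      have := keyfib σ₁ σ₂ (Sum.inl ∘ b)
        (fun k k' => by rw [h1.1 k k']; simp [Function.comp])
        (fun k k' => by rw [h2.1 k k']; simp [Function.comp]) hσ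
      intro u v
      have h3 := this u v
      simpa [Function.comp] using h3
    have keyw : ∀ u v : Fin e, w (η u) = w (η v) ↔ w u = w v := by
      have := keyfib τ₁ τ₂ (Sum.inr ∘ w)
        (fun k k' => by rw [h1.2 k k']; simp [Function.comp])
        (fun k k' => by rw [h2.2 k k']; simp [Function.comp]) hτ
      intro u v
      have h3 := this u v
      simpa [Function.comp] using h3
    -- build the induced maps on vertices
    have hBbij : Function.Bijective (fun v => b (η (Function.surjInv hb v))) := by
      constructor
      · intro v v' hvv
        obtain ⟨k, rfl⟩ := hb v
        obtain ⟨k', rfl⟩ := hb v'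
        have hk : b (η (Function.surjInv hb (b k))) = b (η k) :=
          (keyb _ k).mpr (Function.surjInv_eq hb (b k))
        have hk' : b (η (Function.surjInv hb (b k'))) = b (η k') :=
          (keyb _ k').mpr (Function.surjInv_eq hb (b k'))
        simp only [] at hvv
        rw [hk, hk'] at hvv
        exact (keyb k k').mp hvv
      · intro v'
        obtain ⟨k', rfl⟩ := hb v'
        refine ⟨b (η⁻¹ k'), ?_⟩
        have hk : b (η (Function.surjInv hb (b (η⁻¹ k')))) = b (η (η⁻¹ k')) :=
          (keyb _ (η⁻¹ k')).mpr (Function.surjInv_eq hb _)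
        show b (η (Function.surjInv hb (b (η⁻¹ k')))) = b k'
        rw [hk, ← Equiv.Perm.mul_apply, mul_inv_cancel, Equiv.Perm.one_apply]
    have hWbij : Function.Bijective (fun u => w (η (Function.surjInv hw u))) := by
      constructor
      · intro v v' hvv
        obtain ⟨k, rfl⟩ := hw v
        obtain ⟨k', rfl⟩ := hw v'
        have hk : w (η (Function.surjInv hw (w k))) = w (η k) :=
          (keyw _ k).mpr (Function.surjInv_eq hw (w k))
        have hk' : w (η (Function.surjInv hw (w k'))) = w (η k') :=
          (keyw _ k').mpr (Function.surjInv_eq hw (w k'))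
        simp only [] at hvv
        rw [hk, hk'] at hvv
        exact (keyw k k').mp hvv
      · intro v'
        obtain ⟨k', rfl⟩ := hw v'
        refine ⟨w (η⁻¹ k'), ?_⟩
        have hk : w (η (Function.surjInv hw (w (η⁻¹ k')))) = w (η (η⁻¹ k')) :=
          (keyw _ (η⁻¹ k')).mpr (Function.surjInv_eq hw _)
        show w (η (Function.surjInv hw (w (η⁻¹ k')))) = w k'
        rw [hk, ← Equiv.Perm.mul_apply, mul_inv_cancel, Equiv.Perm.one_apply]
    obtain ⟨-, -, hπ⟩ := htrivial (Equiv.ofBijective _ hBbij) (Equiv.ofBijective _ hWbij) η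
      (by
        funext k
        simp only [Function.comp_apply, Equiv.ofBijective_apply]
        exact ((keyb _ k).mpr (Function.surjInv_eq hb (b k))).symm)
      (by
        funext k
        simp only [Function.comp_apply, Equiv.ofBijective_apply]
        exact ((keyw _ k).mpr (Function.surjInv_eq hw (w k))).symm)
    have hη : η = 1 := hπ
    apply hne
    rw [hη] at hσ hτ
    simp only [one_mul, inv_one, mul_one] at hσ hτ
    rw [hσ, hτ]
  refine ⟨part1, ?_, ?_⟩
  · -- the quotient is trivial
    set r := fun p q : {p : Equiv.Perm (Fin e) × Equiv.Perm (Fin e) //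
        IsAdmissiblePair b w p.1 p.2} =>
      ∃ η : Equiv.Perm (Fin e), η * p.val.1 * η⁻¹ = q.val.1 ∧ η * p.val.2 * η⁻¹ = q.val.2
      with hr
    have hrel : ∀ p q, r p q → p = q := by
      intro p q hpq
      by_contra hne
      have hvne : (p.val.1, p.val.2) ≠ (q.val.1, q.val.2) := by
        intro h
        exact hne (Subtype.ext (Prod.ext (congrArg Prod.fst h) (congrArg Prod.snd h)))
      exact part1 _ _ _ _ p.prop q.prop hvne hpq
    have hbij : Function.Bijective (Quot.mk r) := by
      constructor
      · have hgen : ∀ p q, Relation.EqvGen r p q → p = q := by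
          intro p q hpq
          induction hpq with
          | rel _ _ hab => exact hrel _ _ hab
          | refl => rfl
          | symm _ _ _ ih => exact ih.symm
          | trans _ _ _ _ _ ih1 ih2 => exact ih1.trans ih2
        intro p q h
        exact hgen p q (Quot.eqvGen_exact h)
      · exact fun x => Quot.exists_rep x
    exact (Nat.card_congr (Equiv.ofBijective _ hbij)).symm
  · -- the count
    have hsplit : Nat.card {p : Equiv.Perm (Fin e) × Equiv.Perm (Fin e) //
          IsAdmissiblePair b w p.1 p.2}
        = Nat.card {σ : Equiv.Perm (Fin e) //
              ∀ x y : Fin e, (∃ m : ℤ, (σ ^ m) x = y) ↔ b x = b y}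
          * Nat.card {τ : Equiv.Perm (Fin e) //
              ∀ x y : Fin e, (∃ m : ℤ, (τ ^ m) x = y) ↔ w x = w y} := by
      rw [← Nat.card_prod]
      exact Nat.card_congr (Equiv.subtypeProdEquivProd
        (p := fun σ : Equiv.Perm (Fin e) =>
          ∀ x y : Fin e, (∃ m : ℤ, (σ ^ m) x = y) ↔ b x = b y)
        (q := fun τ : Equiv.Perm (Fin e) =>
          ∀ x y : Fin e, (∃ m : ℤ, (τ ^ m) x = y) ↔ w x = w y))
    rw [hsplit, card_adm b hb, card_adm w hw]
end

section
/- Let e ≥ 1 and let b : Fin e → B, w : Fin e → W be the incidence maps of a finite connected bipartite graph. Then for every pair (σ, τ) in the set F of admissible permutation pairs, the subgroup of the permutation group of Fin e generated by σ and τ acts transitively on Fin e (so (σ, τ) is the monodromy of a dessin d'enfant whose underlying bipartite graph is the given one). -/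
theorem stmt4 {e : ℕ} (he : 1 ≤ e) {B W : Type*} [Fintype B] [Fintype W]
    (b : Fin e → B) (w : Fin e → W) (hb : Function.Surjective b) (hw : Function.Surjective w)
    (hconn : ∀ k k' : Fin e,
      Relation.EqvGen (fun k k' => b k = b k' ∨ w k = w k') k k')
    (σ τ : Equiv.Perm (Fin e)) (hF : IsAdmissiblePair b w σ τ) :
    ∀ k k' : Fin e, ∃ g ∈ Subgroup.closure ({σ, τ} : Set (Equiv.Perm (Fin e))), g k = k' := by
  intro k k'
  have hσ : σ ∈ Subgroup.closure ({σ, τ} : Set (Equiv.Perm (Fin e))) :=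
    Subgroup.subset_closure (by simp)
  have hτ : τ ∈ Subgroup.closure ({σ, τ} : Set (Equiv.Perm (Fin e))) :=
    Subgroup.subset_closure (by simp)
  induction hconn k k' with
  | rel x y h =>
    rcases h with h | h
    · obtain ⟨n, hn⟩ := (hF.1 x y).mpr h
      exact ⟨σ ^ n, Subgroup.zpow_mem _ hσ n, hn⟩
    · obtain ⟨n, hn⟩ := (hF.2 x y).mpr h
      exact ⟨τ ^ n, Subgroup.zpow_mem _ hτ n, hn⟩
  | refl x => exact ⟨1, one_mem _, rfl⟩
  | symm x y _ ih =>
    obtain ⟨g, hg, hgx⟩ := ih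
    exact ⟨g⁻¹, inv_mem hg, by simp [← hgx]⟩
  | trans x y z _ _ ih1 ih2 =>
    obtain ⟨g, hg, hgx⟩ := ih1
    obtain ⟨g', hg', hgy⟩ := ih2
    exact ⟨g' * g, mul_mem hg' hg, by simp [hgx, hgy]⟩
end

section
/- Let e ≥ 1 and let b : Fin e → B, w : Fin e → W be surjective incidence maps of a finite bipartite graph, and let (σ, τ) be a pair in the set F of admissible permutation pairs. If the subgroup generated by σ and τ acts transitively on Fin e, then the bipartite graph is connected, i.e., the equivalence relation on Fin e generated by R k k' ↔ (b k = b k' ∨ w k = w k') relates any two edges. -/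
theorem stmt5 {e : ℕ} (he : 1 ≤ e) {B W : Type*} [Fintype B] [Fintype W]
    (b : Fin e → B) (w : Fin e → W) (hb : Function.Surjective b) (hw : Function.Surjective w)
    (σ τ : Equiv.Perm (Fin e)) (hF : IsAdmissiblePair b w σ τ)
    (htrans : ∀ k k' : Fin e,
      ∃ g ∈ Subgroup.closure ({σ, τ} : Set (Equiv.Perm (Fin e))), g k = k') :
    ∀ k k' : Fin e, Relation.EqvGen (fun k k' => b k = b k' ∨ w k = w k') k k' := by
  set R : Fin e → Fin e → Prop := fun k k' => b k = b k' ∨ w k = w k' with hR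
  have key : ∀ g ∈ Subgroup.closure ({σ, τ} : Set (Equiv.Perm (Fin e))),
      ∀ k, Relation.EqvGen R k (g k) := by
    intro g hg
    induction hg using Subgroup.closure_induction with
    | mem x hx =>
      intro k
      rcases hx with rfl | rfl
      · refine Relation.EqvGen.rel _ _ (Or.inl ?_)
        exact (hF.1 k (x k)).mp ⟨1, by simp⟩
      · refine Relation.EqvGen.rel _ _ (Or.inr ?_)
        exact (hF.2 k (x k)).mp ⟨1, by simp⟩
    | one => intro k; simpa using Relation.EqvGen.refl k
    | mul x y hx hy ihx ihy =>
      intro k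
      exact (ihy k).trans _ _ _ (by simpa using ihx (y k))
    | inv x hx ih =>
      intro k
      have := ih (x⁻¹ k)
      rw [← Equiv.Perm.mul_apply, mul_inv_cancel, Equiv.Perm.one_apply] at this
      exact this.symm _ _
  intro k k'
  obtain ⟨g, hg, hgk⟩ := htrans k k'
  simpa [hgk] using key g hg k
end

section
/- Let V and E be finite types, let ε : E → Sym2 V be the incidence map of a finite connected multigraph G (connected means: the equivalence relation on V generated by 'u and v are joined by some edge' relates any two vertices), and suppose G is not a special graph, i.e., it is not the case that V has exactly two elements and no edge of G is a loop. If (φ₁ : V ≃ V, φ₂ : E ≃ E) is a graph automorphism of G (meaning ε (φ₂ x) = Sym2.map φ₁ (ε x) for every edge x) with φ₂ equal to the identity on E, then φ₁ is the identity on V. -/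
theorem stmt8 {V E : Type*} [Fintype V] [Fintype E]
    (ε : E → Sym2 V)
    (hconn : ∀ u v : V,
      Relation.EqvGen (fun u v => ∃ x : E, ε x = s(u, v)) u v)
    (hnotspecial : ¬ (Nat.card V = 2 ∧ ∀ x : E, ¬ (ε x).IsDiag))
    (φ₁ : V ≃ V) (φ₂ : E ≃ E)
    (haut : ∀ x : E, ε (φ₂ x) = Sym2.map φ₁ (ε x))
    (hφ₂ : ∀ x : E, φ₂ x = x) :
    ∀ v : V, φ₁ v = v := by
  have key : ∀ x : E, ε x = Sym2.map φ₁ (ε x) := by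
    intro x
    have := haut x
    rwa [hφ₂ x] at this
  have hA : ∀ (x : E) (u w : V), ε x = s(u, w) →
      (φ₁ u = u ∧ φ₁ w = w) ∨ (φ₁ u = w ∧ φ₁ w = u) := by
    intro x u w h
    have h2 := key x
    rw [h, Sym2.map_pair_eq, Sym2.eq_iff] at h2
    rcases h2 with ⟨h1, h2⟩ | ⟨h1, h2⟩
    · exact Or.inl ⟨h1.symm, h2.symm⟩
    · exact Or.inr ⟨h2.symm, h1.symm⟩
  by_cases hfix : ∃ z, φ₁ z = z
  · obtain ⟨z, hz⟩ := hfix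
    have step : ∀ a b : V,
        Relation.EqvGen (fun u v => ∃ x : E, ε x = s(u, v)) a b →
        (φ₁ a = a ↔ φ₁ b = b) := by
      intro a b h
      induction h with
      | rel a b hr =>
        obtain ⟨x, hx⟩ := hr
        rcases hA x a b hx with ⟨h1, h2⟩ | ⟨h1, h2⟩
        · exact ⟨fun _ => h2, fun _ => h1⟩
        · constructor
          · intro ha
            have hab : a = b := ha.symm.trans h1
            subst hab; exact ha
          · intro hb
            have hab : b = a := hb.symm.trans h2
            subst hab; exact hb
      | refl => exact Iff.rfl
      | symm _ _ _ ih => exact ih.symm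
      | trans _ _ _ _ _ ih1 ih2 => exact ih1.trans ih2
    intro v
    exact (step z v (hconn z v)).mp hz
  · push_neg at hfix
    intro v
    exfalso
    have hedge : ∀ a b : V,
        Relation.EqvGen (fun u v => ∃ x : E, ε x = s(u, v)) a b →
        a = b ∨ ((∃ x w, ε x = s(a, w)) ∧ (∃ x w, ε x = s(b, w))) := by
      intro a b h
      induction h with
      | rel a b hr =>
        obtain ⟨x, hx⟩ := hr
        exact Or.inr ⟨⟨x, b, hx⟩, ⟨x, a, by rw [hx, Sym2.eq_swap]⟩⟩
      | refl => exact Or.inl rfl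
      | symm _ _ _ ih =>
        rcases ih with h | ⟨h1, h2⟩
        · exact Or.inl h.symm
        · exact Or.inr ⟨h2, h1⟩
      | trans a b c _ _ ih1 ih2 =>
        rcases ih1 with h | ⟨h1, h2⟩
        · subst h; exact ih2
        · rcases ih2 with h | ⟨h3, h4⟩
          · subst h; exact Or.inr ⟨h1, h2⟩
          · exact Or.inr ⟨h1, h4⟩
    rcases hedge v (φ₁ v) (hconn v (φ₁ v)) with h | ⟨⟨x, w, hx⟩, _⟩
    · exact hfix v h.symm
    · rcases hA x v w hx with ⟨h1, _⟩ | ⟨h1, h2⟩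
      · exact hfix v h1
      · have hvw : v ≠ w := fun h => hfix v (by rw [← h] at h1; exact h1)
        have mem : ∀ a b : V,
            Relation.EqvGen (fun u v => ∃ x : E, ε x = s(u, v)) a b →
            ((a = v ∨ a = w) ↔ (b = v ∨ b = w)) := by
          intro a b h
          induction h with
          | rel a b hr =>
            obtain ⟨x', hx'⟩ := hr
            rcases hA x' a b hx' with ⟨ha1, _⟩ | ⟨ha1, ha2⟩
            · exact absurd ha1 (hfix a)
            · constructor
              · rintro (h | h) <;> subst h
                · exact Or.inr (ha1.symm.trans h1)
                · exact Or.inl (ha1.symm.trans h2)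
              · rintro (h | h) <;> subst h
                · exact Or.inr (ha2.symm.trans h1)
                · exact Or.inl (ha2.symm.trans h2)
          | refl => exact Iff.rfl
          | symm _ _ _ ih => exact ih.symm
          | trans _ _ _ _ _ ih1 ih2 => exact ih1.trans ih2
        have allz : ∀ z : V, z = v ∨ z = w := fun z =>
          (mem v z (hconn v z)).mp (Or.inl rfl)
        apply hnotspecial
        constructor
        · rw [Nat.card_eq_two_iff]
          refine ⟨v, w, hvw, Set.eq_univ_of_forall fun z => ?_⟩
          rcases allz z with h | h <;> simp [h]
        · intro x' hdiag
          obtain ⟨⟨a, b⟩, hab⟩ := Quot.exists_rep (ε x')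
          have hab' : ε x' = s(a, b) := hab.symm
          rw [hab'] at hdiag
          rw [Sym2.mk_isDiag_iff] at hdiag
          subst hdiag
          rcases hA x' a a hab' with ⟨h1', _⟩ | ⟨h1', _⟩ <;>
            exact hfix a h1'
end

section
/- Let e ≥ 1 and let σ, τ be permutations of Fin e such that the subgroup generated by σ and τ acts transitively on Fin e. Let α be the number of orbits of σ on Fin e, β the number of orbits of τ, and γ the number of orbits of the product τ σ. Then e − α − β − γ is even and α + β + γ ≤ e + 2; consequently g = 1 + (e − α − β − γ)/2 is a nonnegative integer (the genus of the dessin d'enfant with monodromy pair (σ, τ)). -/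
open Equiv Equiv.Perm MulAction Subgroup

namespace Stmt9

variable {β : Type*}

lemma card_quot_congr {s t : Setoid β} (h : ∀ x y, s.r x y ↔ t.r x y) :
    Nat.card (Quotient s) = Nat.card (Quotient t) := by
  have : s = t := Setoid.ext h
  subst this; rfl

/-- the relation obtained from `r` by merging the classes of `a` and `b`. -/
def mergeRel (r : Setoid β) (a b : β) : β → β → Prop := fun x y =>
  r.r x y ∨ (r.r x a ∧ r.r b y) ∨ (r.r x b ∧ r.r a y)

lemma mergeRel_equivalence (r : Setoid β) (a b : β) : Equivalence (mergeRel r a b) := by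
  constructor
  · intro x; exact Or.inl (r.refl x)
  · rintro x y (h | ⟨h1, h2⟩ | ⟨h1, h2⟩)
    · exact Or.inl (r.symm h)
    · exact Or.inr (Or.inr ⟨r.symm h2, r.symm h1⟩)
    · exact Or.inr (Or.inl ⟨r.symm h2, r.symm h1⟩)
  · rintro x y z (h | ⟨h1, h2⟩ | ⟨h1, h2⟩) (h' | ⟨h1', h2'⟩ | ⟨h1', h2'⟩)
    · exact Or.inl (r.trans h h')
    · exact Or.inr (Or.inl ⟨r.trans h h1', h2'⟩)
    · exact Or.inr (Or.inr ⟨r.trans h h1', h2'⟩)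
    · exact Or.inr (Or.inl ⟨h1, r.trans h2 h'⟩)
    · exact Or.inl (r.trans h1 (r.trans (r.symm (r.trans h2 h1')) h2'))
    · exact Or.inl (r.trans h1 h2')
    · exact Or.inr (Or.inr ⟨h1, r.trans h2 h'⟩)
    · exact Or.inl (r.trans h1 h2')
    · exact Or.inl (r.trans h1 (r.trans (r.symm (r.trans h2 h1')) h2'))

def mergeSetoid (r : Setoid β) (a b : β) : Setoid β :=
  ⟨mergeRel r a b, mergeRel_equivalence r a b⟩

lemma mergeSetoid_rel {r : Setoid β} {a b x y : β} :
    (mergeSetoid r a b).r x y ↔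
      (r.r x y ∨ (r.r x a ∧ r.r b y) ∨ (r.r x b ∧ r.r a y)) := Iff.rfl

lemma mergeSetoid_rel_of_rel {r : Setoid β} {a b : β} (hab : r.r a b) (x y : β) :
    (mergeSetoid r a b).r x y ↔ r.r x y := by
  rw [mergeSetoid_rel]
  constructor
  · rintro (h | ⟨h1, h2⟩ | ⟨h1, h2⟩)
    · exact h
    · exact r.trans h1 (r.trans hab h2)
    · exact r.trans h1 (r.trans (r.symm hab) h2)
  · exact Or.inl

lemma card_quot_le_of_le {r s : Setoid β} [Finite β] (h : ∀ x y, r.r x y → s.r x y) :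
    Nat.card (Quotient s) ≤ Nat.card (Quotient r) := by
  refine Nat.card_le_card_of_surjective
    (Quotient.lift (Quotient.mk s) fun x y hxy => Quotient.sound (h x y hxy)) ?_
  intro q
  obtain ⟨x, rfl⟩ := Quotient.exists_rep q
  exact ⟨Quotient.mk r x, rfl⟩

lemma card_quotient_merge [Finite β] (r : Setoid β) (a b : β) (hab : ¬ r.r a b) :
    Nat.card (Quotient r) = Nat.card (Quotient (mergeSetoid r a b)) + 1 := by
  classical
  set s := mergeSetoid r a b with hs
  let φ : Quotient r → Quotient s :=
    Quotient.lift (Quotient.mk s) fun x y hxy => Quotient.sound (Or.inl hxy)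
  let ψ : {q : Quotient r // q ≠ Quotient.mk r b} → Quotient s := fun q => φ q.1
  have hinj : Function.Injective ψ := by
    rintro ⟨q1, hq1⟩ ⟨q2, hq2⟩ h
    obtain ⟨x, rfl⟩ := Quotient.exists_rep q1
    obtain ⟨y, rfl⟩ := Quotient.exists_rep q2
    have h' := Quotient.exact h
    rcases h' with (h' | ⟨h1, h2⟩ | ⟨h1, h2⟩)
    · exact Subtype.ext (Quotient.sound h')
    · exact absurd (Quotient.sound (r.symm h2) : Quotient.mk r y = Quotient.mk r b) hq2
    · exact absurd (Quotient.sound h1 : Quotient.mk r x = Quotient.mk r b) hq1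
  have hsurj : Function.Surjective ψ := by
    intro q
    obtain ⟨y, rfl⟩ := Quotient.exists_rep q
    by_cases hyb : r.r y b
    · refine ⟨⟨Quotient.mk r a, ?_⟩, ?_⟩
      · intro h; exact hab (Quotient.exact h)
      · refine Quotient.sound ?_
        exact Or.inr (Or.inl ⟨r.refl a, r.symm hyb⟩)
    · exact ⟨⟨Quotient.mk r y, fun h => hyb (Quotient.exact h)⟩, rfl⟩
  have hcard : Nat.card {q : Quotient r // q ≠ Quotient.mk r b} = Nat.card (Quotient s) :=
    Nat.card_congr (Equiv.ofBijective ψ ⟨hinj, hsurj⟩)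
  have hopt := Nat.card_congr (Equiv.optionSubtypeNe (Quotient.mk r b))
  have hfin : Nat.card (Option {q : Quotient r // q ≠ Quotient.mk r b}) =
      Nat.card {q : Quotient r // q ≠ Quotient.mk r b} + 1 := by
    have := Fintype.ofFinite {q : Quotient r // q ≠ Quotient.mk r b}
    simp [Nat.card_eq_fintype_card]
  rw [hfin, hcard] at hopt
  omega


/-! ### Permutation cycle counting -/

variable {n : ℕ}

noncomputable def cyc (f : Perm (Fin n)) : ℕ := Nat.card (Quotient (SameCycle.setoid f))

lemma sameCycle_setoid_rel (f : Perm (Fin n)) (x y : Fin n) :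
    (SameCycle.setoid f).r x y ↔ SameCycle f x y := Iff.rfl

lemma cyc_eq_card_orbitRel (f : Perm (Fin n)) :
    Nat.card (MulAction.orbitRel.Quotient (Subgroup.zpowers f) (Fin n)) = cyc f := by
  apply card_quot_congr
  intro x y
  show x ∈ MulAction.orbit (Subgroup.zpowers f) y ↔ SameCycle f x y
  rw [MulAction.mem_orbit_iff]
  constructor
  · rintro ⟨⟨g, hg⟩, h⟩
    obtain ⟨k, rfl⟩ := Subgroup.mem_zpowers_iff.mp hg
    exact Equiv.Perm.SameCycle.symm (show SameCycle f y x from ⟨k, h⟩)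
  · rintro ⟨i, hi⟩
    refine ⟨⟨f ^ (-i), Subgroup.mem_zpowers_iff.mpr ⟨-i, rfl⟩⟩, ?_⟩
    show (f ^ (-i)) y = x
    rw [← hi]
    simp [zpow_neg]

lemma cyc_le (f : Perm (Fin n)) : cyc f ≤ n := by
  have : Nat.card (Quotient (SameCycle.setoid f)) ≤ Nat.card (Fin n) :=
    Nat.card_le_card_of_surjective (Quotient.mk _) Quotient.exists_rep
  simpa [cyc, Nat.card_eq_fintype_card] using this

lemma cyc_one : cyc (1 : Perm (Fin n)) = n := by
  have : Quotient (SameCycle.setoid (1 : Perm (Fin n))) ≃ Fin n := by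
    refine Equiv.ofBijective (Quotient.lift id fun x y (h : SameCycle 1 x y) => ?_) ⟨?_, ?_⟩
    · exact sameCycle_one.mp h
    · rintro ⟨x⟩ ⟨y⟩ h
      exact Quotient.sound (sameCycle_one.mpr (h : x = y))
    · exact fun x => ⟨Quotient.mk _ x, rfl⟩
  rw [cyc, Nat.card_congr this, Nat.card_eq_fintype_card, Fintype.card_fin]

lemma pow_swap_mul_eq {f : Perm (Fin n)} {a b x : Fin n} (ha : ¬ SameCycle f x a)
    (hb : ¬ SameCycle f x b) : ∀ k : ℕ, ((swap a b * f) ^ k) x = (f ^ k) x := by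
  intro k
  induction k with
  | zero => rfl
  | succ k ih =>
    have hne1 : f ((f ^ k) x) ≠ a := fun h => ha ⟨((k + 1 : ℕ) : ℤ),
      by rw [zpow_natCast, pow_succ' f, Perm.mul_apply]; exact h⟩
    have hne2 : f ((f ^ k) x) ≠ b := fun h => hb ⟨((k + 1 : ℕ) : ℤ),
      by rw [zpow_natCast, pow_succ' f, Perm.mul_apply]; exact h⟩
    calc ((swap a b * f) ^ (k + 1)) x = (swap a b * f) (((swap a b * f) ^ k) x) := by
          rw [pow_succ' (swap a b * f), Perm.mul_apply]
      _ = (swap a b * f) ((f ^ k) x) := by rw [ih]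
      _ = swap a b (f ((f ^ k) x)) := rfl
      _ = f ((f ^ k) x) := swap_apply_of_ne_of_ne hne1 hne2
      _ = (f ^ (k + 1)) x := by rw [pow_succ' f, Perm.mul_apply]


lemma pow_mul_fix {f : Perm (Fin n)} {a : Fin n} {p : ℕ} (hp : (f ^ p) a = a) :
    ∀ q : ℕ, (f ^ (p * q)) a = a := by
  intro q
  induction q with
  | zero => simp
  | succ q ih => rw [mul_add, mul_one, pow_add, Perm.mul_apply, hp]; exact ih

lemma walk_aux {f : Perm (Fin n)} {a b : Fin n} {m : ℕ}
    (hne : ∀ j, 0 < j → j < m → (f ^ j) a ≠ a ∧ (f ^ j) a ≠ b) :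
    ∀ j, j < m → ((swap a b * f) ^ j) a = (f ^ j) a := by
  intro j
  induction j with
  | zero => intro _; rfl
  | succ j ih =>
    intro hj
    obtain ⟨hja, hjb⟩ := hne (j + 1) j.succ_pos hj
    calc ((swap a b * f) ^ (j + 1)) a = (swap a b * f) (((swap a b * f) ^ j) a) := by
          rw [pow_succ' (swap a b * f), Perm.mul_apply]
      _ = swap a b (f ((f ^ j) a)) := by rw [ih (Nat.lt_of_succ_lt hj)]; rfl
      _ = swap a b ((f ^ (j + 1)) a) := by rw [pow_succ' f, Perm.mul_apply]
      _ = (f ^ (j + 1)) a := swap_apply_of_ne_of_ne hja hjb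

/-- C1 : if `a`, `b` lie in different cycles of `f`, they lie in the same cycle of
`swap a b * f`. -/
lemma sameCycle_swap_mul_of_not {f : Perm (Fin n)} {a b : Fin n} (hab : a ≠ b)
    (hnc : ¬ SameCycle f a b) : SameCycle (swap a b * f) a b := by
  have hex : ∃ k, 0 < k ∧ (f ^ k) a = a :=
    ⟨orderOf f, orderOf_pos f, by rw [pow_orderOf_eq_one]; rfl⟩
  obtain ⟨m, ⟨hm0, hma⟩, hmin⟩ : ∃ m, (0 < m ∧ (f ^ m) a = a) ∧
      ∀ k < m, ¬(0 < k ∧ (f ^ k) a = a) :=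
    ⟨Nat.find hex, Nat.find_spec hex, fun k hk => Nat.find_min hex hk⟩
  have walk := walk_aux (f := f) (a := a) (b := b) (m := m) (fun j hj0 hjm =>
    ⟨fun h => hmin j hjm ⟨hj0, h⟩, fun h => hnc ⟨(j : ℤ), by rw [zpow_natCast]; exact h⟩⟩)
  have hfin : ((swap a b * f) ^ m) a = b := by
    obtain ⟨m', rfl⟩ : ∃ m', m = m' + 1 := ⟨m - 1, (Nat.succ_pred_eq_of_pos hm0).symm⟩
    rw [pow_succ' (swap a b * f), Perm.mul_apply, walk m' (Nat.lt_succ_self m')]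
    show swap a b (f ((f ^ m') a)) = b
    rw [show f ((f ^ m') a) = (f ^ (m' + 1)) a from by rw [pow_succ' f, Perm.mul_apply],
      hma, swap_apply_left]
  exact ⟨(m : ℤ), by rw [zpow_natCast]; exact hfin⟩

/-- C2 : if `a`, `b` lie in the same cycle of `f`, they lie in different cycles of
`swap a b * f`. -/
lemma not_sameCycle_swap_mul {f : Perm (Fin n)} {a b : Fin n} (hab : a ≠ b)
    (hc : SameCycle f a b) : ¬ SameCycle (swap a b * f) a b := by
  have hex : ∃ k, 0 < k ∧ (f ^ k) a = b := by
    obtain ⟨i, _, hi⟩ := hc.exists_pow_eq'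
    rcases Nat.eq_zero_or_pos i with h0 | h0
    · exact absurd (by simpa [h0] using hi) hab
    · exact ⟨i, h0, hi⟩
  obtain ⟨m, ⟨hm0, hmb⟩, hmin⟩ : ∃ m, (0 < m ∧ (f ^ m) a = b) ∧
      ∀ k < m, ¬(0 < k ∧ (f ^ k) a = b) :=
    ⟨Nat.find hex, Nat.find_spec hex, fun k hk => Nat.find_min hex hk⟩
  have hnofix : ∀ p, 0 < p → p < m → (f ^ p) a ≠ a := by
    intro p hp0 hpm hpa
    have hdecomp : (f ^ m) a = (f ^ (m % p)) a := by
      conv_lhs => rw [← Nat.mod_add_div m p]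
      rw [pow_add, Perm.mul_apply, pow_mul_fix hpa]
    rcases Nat.eq_zero_or_pos (m % p) with h0 | h0
    · rw [hmb, h0] at hdecomp
      exact hab (by simpa using hdecomp.symm)
    · exact hmin (m % p) (lt_trans (Nat.mod_lt m hp0) hpm) ⟨h0, by rw [← hdecomp]; exact hmb⟩
  have walk := walk_aux (f := f) (a := a) (b := b) (m := m) (fun j hj0 hjm =>
    ⟨hnofix j hj0 hjm, fun h => hmin j hjm ⟨hj0, h⟩⟩)
  have hgm : ((swap a b * f) ^ m) a = a := by
    obtain ⟨m', rfl⟩ : ∃ m', m = m' + 1 := ⟨m - 1, (Nat.succ_pred_eq_of_pos hm0).symm⟩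
    rw [pow_succ' (swap a b * f), Perm.mul_apply, walk m' (Nat.lt_succ_self m')]
    show swap a b (f ((f ^ m') a)) = a
    rw [show f ((f ^ m') a) = (f ^ (m' + 1)) a from by rw [pow_succ' f, Perm.mul_apply],
      hmb, swap_apply_right]
  have hper : ∀ k : ℕ, ((swap a b * f) ^ k) a = ((swap a b * f) ^ (k % m)) a := by
    intro k
    conv_lhs => rw [← Nat.mod_add_div k m]
    rw [pow_add, Perm.mul_apply, pow_mul_fix hgm]
  intro hcon
  obtain ⟨i, _, hi⟩ := hcon.exists_pow_eq'
  rw [hper i, walk (i % m) (Nat.mod_lt i hm0)] at hi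
  rcases Nat.eq_zero_or_pos (i % m) with h0 | h0
  · rw [h0] at hi
    exact hab (by simpa using hi)
  · exact hmin (i % m) (Nat.mod_lt i hm0) ⟨h0, hi⟩


/-- membership in the union of the cycles of `a` and `b`. -/
def Pab (f : Perm (Fin n)) (a b x : Fin n) : Prop := SameCycle f a x ∨ SameCycle f b x

lemma pab_apply {f : Perm (Fin n)} {a b x : Fin n} (h : Pab f a b x) : Pab f a b (f x) := by
  rcases h with h | h
  · exact Or.inl (h.trans ⟨1, by simp⟩)
  · exact Or.inr (h.trans ⟨1, by simp⟩)

lemma pab_swap_mul_apply {f : Perm (Fin n)} {a b x : Fin n} (h : Pab f a b x) :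
    Pab f a b ((swap a b * f) x) := by
  have hf := pab_apply h
  show Pab f a b (swap a b (f x))
  rcases eq_or_ne (f x) a with h1 | h1
  · rw [h1, swap_apply_left]; exact Or.inr SameCycle.rfl
  rcases eq_or_ne (f x) b with h2 | h2
  · rw [h2, swap_apply_right]; exact Or.inl SameCycle.rfl
  · rw [swap_apply_of_ne_of_ne h1 h2]; exact hf

lemma pab_pow {f : Perm (Fin n)} {a b x : Fin n} (h : Pab f a b x) (k : ℕ) :
    Pab f a b (((swap a b * f) ^ k) x) := by
  induction k with
  | zero => exact h
  | succ k ih =>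
    rw [pow_succ' (swap a b * f), Perm.mul_apply]
    exact pab_swap_mul_apply ih

lemma sameCycle_swap_mul_a {f : Perm (Fin n)} {a b : Fin n} (hab : a ≠ b)
    (hnc : ¬ SameCycle f a b) : ∀ z, Pab f a b z → SameCycle (swap a b * f) a z := by
  have hC1 := sameCycle_swap_mul_of_not hab hnc
  have step : ∀ z, SameCycle (swap a b * f) a z → SameCycle (swap a b * f) a (f z) := by
    intro z hz
    have hgz : SameCycle (swap a b * f) a ((swap a b * f) z) := hz.trans ⟨1, by simp⟩
    have hfz : f z = swap a b ((swap a b * f) z) := by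
      show f z = swap a b (swap a b (f z))
      rw [swap_apply_self]
    rcases eq_or_ne ((swap a b * f) z) a with h1 | h1
    · rw [hfz, h1, swap_apply_left]; exact hC1
    rcases eq_or_ne ((swap a b * f) z) b with h2 | h2
    · rw [hfz, h2, swap_apply_right]
    · rw [hfz, swap_apply_of_ne_of_ne h1 h2]; exact hgz
  have powa : ∀ k : ℕ, SameCycle (swap a b * f) a ((f ^ k) a) := by
    intro k
    induction k with
    | zero => exact SameCycle.rfl
    | succ k ih => rw [pow_succ' f, Perm.mul_apply]; exact step _ ih
  have powb : ∀ k : ℕ, SameCycle (swap a b * f) a ((f ^ k) b) := by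
    intro k
    induction k with
    | zero => exact hC1
    | succ k ih => rw [pow_succ' f, Perm.mul_apply]; exact step _ ih
  rintro z (h | h)
  · obtain ⟨i, _, hi⟩ := h.exists_pow_eq'
    rw [← hi]; exact powa i
  · obtain ⟨i, _, hi⟩ := h.exists_pow_eq'
    rw [← hi]; exact powb i

lemma sameCycle_swap_mul_iff {f : Perm (Fin n)} {a b : Fin n} (hab : a ≠ b)
    (hnc : ¬ SameCycle f a b) (x y : Fin n) :
    SameCycle (swap a b * f) x y ↔ (mergeSetoid (SameCycle.setoid f) a b).r x y := by
  have claQ := sameCycle_swap_mul_a hab hnc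
  rw [mergeSetoid_rel]
  constructor
  · intro h
    by_cases hx : Pab f a b x
    · have hy : Pab f a b y := by
        obtain ⟨k, _, hk⟩ := h.exists_pow_eq'
        rw [← hk]; exact pab_pow hx k
      rcases hx with hxa | hxb <;> rcases hy with hya | hyb
      · exact Or.inl (hxa.symm.trans hya)
      · exact Or.inr (Or.inl ⟨hxa.symm, hyb⟩)
      · exact Or.inr (Or.inr ⟨hxb.symm, hya⟩)
      · exact Or.inl (hxb.symm.trans hyb)
    · obtain ⟨k, _, hk⟩ := h.exists_pow_eq'
      have hxa : ¬ SameCycle f x a := fun hh => hx (Or.inl hh.symm)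
      have hxb : ¬ SameCycle f x b := fun hh => hx (Or.inr hh.symm)
      exact Or.inl ⟨(k : ℤ), by rw [zpow_natCast, ← pow_swap_mul_eq hxa hxb k]; exact hk⟩
  · rintro (h | ⟨h1, h2⟩ | ⟨h1, h2⟩)
    · by_cases hx : Pab f a b x
      · have hy : Pab f a b y := by
          rcases hx with hh | hh
          · exact Or.inl (hh.trans h)
          · exact Or.inr (hh.trans h)
        exact (claQ x hx).symm.trans (claQ y hy)
      · have hxa : ¬ SameCycle f x a := fun hh => hx (Or.inl hh.symm)
        have hxb : ¬ SameCycle f x b := fun hh => hx (Or.inr hh.symm)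
        obtain ⟨k, _, hk⟩ := (h : SameCycle f x y).exists_pow_eq'
        exact ⟨(k : ℤ), by rw [zpow_natCast, pow_swap_mul_eq hxa hxb k]; exact hk⟩
    · exact ((claQ x (Or.inl (SameCycle.symm h1))).symm).trans (claQ y (Or.inr h2))
    · exact ((claQ x (Or.inr (SameCycle.symm h1))).symm).trans (claQ y (Or.inl h2))

lemma cyc_merge {f : Perm (Fin n)} {a b : Fin n} (hab : a ≠ b)
    (hnc : ¬ SameCycle f a b) : cyc f = cyc (swap a b * f) + 1 := by
  have h1 := card_quotient_merge (SameCycle.setoid f) a b hnc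
  have h2 : Nat.card (Quotient (mergeSetoid (SameCycle.setoid f) a b)) = cyc (swap a b * f) :=
    card_quot_congr fun x y => (sameCycle_swap_mul_iff hab hnc x y).symm
  rw [cyc, h1, h2]

lemma cyc_split {f : Perm (Fin n)} {a b : Fin n} (hab : a ≠ b)
    (hc : SameCycle f a b) : cyc (swap a b * f) = cyc f + 1 := by
  have h2 := not_sameCycle_swap_mul hab hc
  have h3 := cyc_merge (f := swap a b * f) hab h2
  rwa [← mul_assoc, swap_mul_self, one_mul] at h3


lemma support_swap_mul_subset {f : Perm (Fin n)} {a : Fin n} (ha : f a ≠ a) :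
    (swap a (f a) * f).support ⊆ f.support.erase a := by
  intro z hz
  rw [Perm.mem_support] at hz
  rw [Finset.mem_erase, Perm.mem_support]
  constructor
  · rintro rfl
    exact hz (by show swap z (f z) (f z) = z; rw [swap_apply_right])
  · intro hfz
    apply hz
    have hza : z ≠ a := by rintro rfl; exact ha hfz
    have hzfa : z ≠ f a := by
      rintro rfl
      exact ha (f.injective (hfz.trans rfl))
    show swap a (f a) (f z) = z
    rw [hfz, swap_apply_of_ne_of_ne hza hzfa]

lemma card_support_swap_mul_lt {f : Perm (Fin n)} {a : Fin n} (ha : f a ≠ a) :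
    (swap a (f a) * f).support.card < f.support.card :=
  lt_of_le_of_lt (Finset.card_le_card (support_swap_mul_subset ha))
    (Finset.card_erase_lt_of_mem (Perm.mem_support.mpr ha))

lemma sign_aux : ∀ K, ∀ f : Perm (Fin n), f.support.card ≤ K →
    Perm.sign f = (-1) ^ (n - cyc f) := by
  intro K
  induction K with
  | zero =>
    intro f hf
    have hf1 : f = 1 := by
      rw [← Perm.support_eq_empty_iff]
      exact Finset.card_eq_zero.mp (Nat.le_antisymm hf (Nat.zero_le _))
    subst hf1
    rw [cyc_one]
    simp
  | succ K ih =>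
    intro f hf
    by_cases h1 : f = 1
    · subst h1; rw [cyc_one]; simp
    · obtain ⟨a, ha⟩ : ∃ a, f a ≠ a := by
        by_contra h
        push_neg at h
        exact h1 (Equiv.ext h)
      have hane : a ≠ f a := Ne.symm ha
      have hsc : SameCycle f a (f a) := ⟨1, by simp⟩
      have hsplit : cyc (swap a (f a) * f) = cyc f + 1 := cyc_split hane hsc
      have hcard : (swap a (f a) * f).support.card ≤ K := by
        have := card_support_swap_mul_lt ha
        omega
      have hsign' := ih (swap a (f a) * f) hcard
      have h2 : Perm.sign f = - Perm.sign (swap a (f a) * f) := by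
        rw [Perm.sign_mul, sign_swap hane, neg_one_mul, neg_neg]
      have hle : cyc (swap a (f a) * f) ≤ n := cyc_le _
      have hexp : n - cyc f = (n - cyc (swap a (f a) * f)) + 1 := by omega
      rw [h2, hsign', hexp, pow_succ, mul_neg_one]

lemma sign_eq_neg_one_pow (f : Perm (Fin n)) : Perm.sign f = (-1) ^ (n - cyc f) :=
  sign_aux f.support.card f le_rfl

lemma even_key (σ τ : Perm (Fin n)) :
    Even ((n - cyc σ) + (n - cyc τ) + (n - cyc (τ * σ))) := by
  have h1 := sign_eq_neg_one_pow σ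
  have h2 := sign_eq_neg_one_pow τ
  have hm : Perm.sign (τ * σ) = Perm.sign τ * Perm.sign σ := Perm.sign_mul τ σ
  rw [h1, h2, sign_eq_neg_one_pow (τ * σ), ← pow_add] at hm
  rw [← neg_one_pow_eq_one_iff_even (R := ℤˣ) (by decide)]
  rw [pow_add, pow_add, hm, ← pow_add, ← pow_add]
  refine Even.neg_one_pow ?_
  exact ⟨(n - cyc τ) + (n - cyc σ), by ring⟩


noncomputable def OO (σ τ : Perm (Fin n)) : ℕ :=
  Nat.card (Quotient (MulAction.orbitRel
    (Subgroup.closure ({σ, τ} : Set (Perm (Fin n)))) (Fin n)))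

lemma orbitRel_rel_of_mem {H : Subgroup (Perm (Fin n))} {g : Perm (Fin n)} (hg : g ∈ H)
    (x : Fin n) : (MulAction.orbitRel H (Fin n)).r (g x) x :=
  ⟨⟨g, hg⟩, rfl⟩

lemma closure_pair_rel (s : Setoid (Fin n)) {σ τ : Perm (Fin n)}
    (hσ : ∀ x, s.r (σ x) x) (hτ : ∀ x, s.r (τ x) x) {g : Perm (Fin n)}
    (hg : g ∈ Subgroup.closure ({σ, τ} : Set (Perm (Fin n)))) : ∀ x, s.r (g x) x := by
  induction hg using Subgroup.closure_induction with
  | mem g hmem =>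
    rcases hmem with rfl | hmem
    · exact hσ
    · rw [Set.mem_singleton_iff] at hmem
      subst hmem
      exact hτ
  | one => exact fun x => s.refl x
  | mul g h _ _ pg ph => exact fun x => s.trans (pg (h x)) (ph x)
  | inv g _ pg =>
    intro x
    have h2 := pg (g⁻¹ x)
    rw [show g (g⁻¹ x) = x from Equiv.apply_symm_apply g x] at h2
    exact s.symm h2

lemma orbitRel_closure_le {σ τ : Perm (Fin n)} (s : Setoid (Fin n))
    (hσ : ∀ x, s.r (σ x) x) (hτ : ∀ x, s.r (τ x) x) : ∀ x y,
    (MulAction.orbitRel (Subgroup.closure ({σ, τ} : Set (Perm (Fin n)))) (Fin n)).r x y →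
      s.r x y := by
  intro x y h
  obtain ⟨⟨g, hg⟩, hgy⟩ := h
  have h2 := closure_pair_rel s hσ hτ hg y
  exact hgy ▸ h2

set_option maxHeartbeats 2000000 in
lemma OO_compare {σ τ τ' : Perm (Fin n)} {a b : Fin n} (hτ : τ = swap a b * τ') :
    OO σ τ' ≤ OO σ τ + 1 ∧
      ((MulAction.orbitRel (Subgroup.closure ({σ, τ'} : Set (Perm (Fin n)))) (Fin n)).r a b →
        OO σ τ' ≤ OO σ τ) := by
  set r := MulAction.orbitRel (Subgroup.closure ({σ, τ'} : Set (Perm (Fin n)))) (Fin n) with hr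
  have hOO' : OO σ τ' = Nat.card (Quotient r) := by rw [hr]; rfl
  have hσr : ∀ x, r.r (σ x) x := by
    rw [hr]
    exact fun x => orbitRel_rel_of_mem (Subgroup.subset_closure (Set.mem_insert _ _)) x
  have hσs : ∀ x, (mergeSetoid r a b).r (σ x) x := fun x => Or.inl (hσr x)
  have hτ'r : ∀ x, r.r (τ' x) x := by
    rw [hr]
    exact fun x => orbitRel_rel_of_mem (Subgroup.subset_closure (Set.mem_insert_of_mem _ (Set.mem_singleton _))) x
  have hτs : ∀ x, (mergeSetoid r a b).r (τ x) x := by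
    intro x
    rw [hτ]
    show (mergeSetoid r a b).r (swap a b (τ' x)) x
    rcases eq_or_ne (τ' x) a with h1 | h1
    · rw [h1, swap_apply_left]
      exact Or.inr (Or.inr ⟨r.refl b, h1 ▸ hτ'r x⟩)
    rcases eq_or_ne (τ' x) b with h2 | h2
    · rw [h2, swap_apply_right]
      exact Or.inr (Or.inl ⟨r.refl a, h2 ▸ hτ'r x⟩)
    · rw [swap_apply_of_ne_of_ne h1 h2]
      exact Or.inl (hτ'r x)
  have hcard : Nat.card (Quotient (mergeSetoid r a b)) ≤ OO σ τ := by
    refine card_quot_le_of_le ?_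
    refine orbitRel_closure_le _ hσs hτs
  constructor
  · by_cases hrab : r.r a b
    · have hc := card_quot_congr fun x y => (mergeSetoid_rel_of_rel hrab x y).symm
      omega
    · have hc := card_quotient_merge r a b hrab
      omega
  · intro hrab
    have hc := card_quot_congr fun x y => (mergeSetoid_rel_of_rel hrab x y).symm
    omega

lemma key_aux : ∀ K, ∀ τ σ : Perm (Fin n), τ.support.card ≤ K →
    cyc σ + cyc τ + cyc (τ * σ) ≤ n + 2 * OO σ τ := by
  intro K
  induction K with
  | zero =>
    intro τ σ hK
    have hτ1 : τ = 1 := by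
      rw [← Perm.support_eq_empty_iff]
      exact Finset.card_eq_zero.mp (Nat.le_antisymm hK (Nat.zero_le _))
    subst hτ1
    have hcl : Subgroup.closure ({σ, (1 : Perm (Fin n))} : Set (Perm (Fin n)))
        = Subgroup.zpowers σ := by
      apply le_antisymm
      · rw [Subgroup.closure_le]
        rintro g (rfl | hg)
        · exact Subgroup.mem_zpowers _
        · rw [Set.mem_singleton_iff] at hg
          subst hg
          exact Subgroup.one_mem _
      · rw [Subgroup.zpowers_eq_closure]
        exact Subgroup.closure_mono (Set.singleton_subset_iff.mpr (Set.mem_insert _ _))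
    have hOO : OO σ 1 = cyc σ := by
      rw [OO, hcl]
      exact cyc_eq_card_orbitRel σ
    rw [one_mul, cyc_one, hOO]
    omega
  | succ K ih =>
    intro τ σ hK
    by_cases hle : τ.support.card ≤ K
    · exact ih τ σ hle
    have hτ1 : τ ≠ 1 := by
      intro h
      subst h
      simp [Perm.support_one] at hle
    obtain ⟨a, ha⟩ : ∃ a, τ a ≠ a := by
      by_contra h
      push_neg at h
      exact hτ1 (Equiv.ext h)
    have hane : a ≠ τ a := Ne.symm ha
    have hsc : SameCycle τ a (τ a) := ⟨1, by simp⟩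
    have hcycτ : cyc (swap a (τ a) * τ) = cyc τ + 1 := cyc_split hane hsc
    have hsupp : (swap a (τ a) * τ).support.card ≤ K := by
      have := card_support_swap_mul_lt ha
      omega
    have IH := ih (swap a (τ a) * τ) σ hsupp
    have hττ' : τ = swap a (τ a) * (swap a (τ a) * τ) := by
      rw [← mul_assoc, swap_mul_self, one_mul]
    have hprod : τ * σ = swap a (τ a) * (swap a (τ a) * τ * σ) := by
      rw [← mul_assoc, ← mul_assoc, swap_mul_self, one_mul]
    obtain ⟨hOO1, hOO2⟩ := OO_compare (σ := σ) hττ'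
    by_cases hsp : SameCycle (swap a (τ a) * τ * σ) a (τ a)
    · have hcycp : cyc (τ * σ) = cyc (swap a (τ a) * τ * σ) + 1 := by
        rw [hprod]
        exact cyc_split hane hsp
      have hrab : (MulAction.orbitRel (Subgroup.closure
          ({σ, swap a (τ a) * τ} : Set (Perm (Fin n)))) (Fin n)).r a (τ a) := by
        have hmem : swap a (τ a) * τ * σ ∈
            Subgroup.closure ({σ, swap a (τ a) * τ} : Set (Perm (Fin n))) :=
          mul_mem (Subgroup.subset_closure (Set.mem_insert_of_mem _ (Set.mem_singleton _)))
            (Subgroup.subset_closure (Set.mem_insert _ _))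
        obtain ⟨i, hi⟩ := hsp
        refine ⟨⟨((swap a (τ a) * τ * σ) ^ i)⁻¹, inv_mem (zpow_mem hmem i)⟩, ?_⟩
        show ((swap a (τ a) * τ * σ) ^ i)⁻¹ (τ a) = a
        rw [Perm.inv_eq_iff_eq]
        exact hi.symm
      have := hOO2 hrab
      omega
    · have hcycp : cyc (swap a (τ a) * τ * σ) = cyc (τ * σ) + 1 := by
        have := cyc_merge (f := swap a (τ a) * τ * σ) hane hsp
        rw [← hprod] at this
        exact this
      omega


end Stmt9

theorem stmt9 {e : ℕ} (he : 1 ≤ e) (σ τ : Equiv.Perm (Fin e))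
    (htrans : ∀ k k' : Fin e,
      ∃ g ∈ Subgroup.closure ({σ, τ} : Set (Equiv.Perm (Fin e))), g k = k')
    (α β γ : ℕ)
    (hα : α = Nat.card (MulAction.orbitRel.Quotient (Subgroup.zpowers σ) (Fin e)))
    (hβ : β = Nat.card (MulAction.orbitRel.Quotient (Subgroup.zpowers τ) (Fin e)))
    (hγ : γ = Nat.card (MulAction.orbitRel.Quotient (Subgroup.zpowers (τ * σ)) (Fin e))) :
    Even ((e : ℤ) - α - β - γ) ∧ α + β + γ ≤ e + 2 ∧
      ∃ g : ℕ, (g : ℤ) = 1 + ((e : ℤ) - α - β - γ) / 2 := by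
  have hα' : α = Stmt9.cyc σ := by rw [hα, Stmt9.cyc_eq_card_orbitRel]
  have hβ' : β = Stmt9.cyc τ := by rw [hβ, Stmt9.cyc_eq_card_orbitRel]
  have hγ' : γ = Stmt9.cyc (τ * σ) := by rw [hγ, Stmt9.cyc_eq_card_orbitRel]
  subst hα' hβ' hγ'
  have h1 : Stmt9.cyc σ ≤ e := Stmt9.cyc_le σ
  have h2 : Stmt9.cyc τ ≤ e := Stmt9.cyc_le τ
  have h3 : Stmt9.cyc (τ * σ) ≤ e := Stmt9.cyc_le (τ * σ)
  have hOO : Stmt9.OO σ τ = 1 := by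
    rw [Stmt9.OO, Nat.card_eq_one_iff_unique]
    constructor
    · constructor
      intro q1 q2
      obtain ⟨x, rfl⟩ := Quotient.exists_rep q1
      obtain ⟨y, rfl⟩ := Quotient.exists_rep q2
      obtain ⟨g, hg, hgx⟩ := htrans y x
      exact Quotient.sound (hgx ▸ Stmt9.orbitRel_rel_of_mem hg y)
    · exact ⟨Quotient.mk _ ⟨0, he⟩⟩
  have hkey := Stmt9.key_aux τ.support.card τ σ le_rfl
  rw [hOO] at hkey
  have hev := Stmt9.even_key σ τ
  obtain ⟨k, hk⟩ := hev
  refine ⟨⟨(k : ℤ) - e, by omega⟩, by omega, ?_⟩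
  have hge : 0 ≤ 1 + ((k : ℤ) - e) := by omega
  refine ⟨(1 + ((k : ℤ) - e)).toNat, ?_⟩
  have hdiv : (e : ℤ) - Stmt9.cyc σ - Stmt9.cyc τ - Stmt9.cyc (τ * σ) = 2 * ((k : ℤ) - e) := by
    omega
  rw [Int.toNat_of_nonneg hge, hdiv, Int.mul_ediv_cancel_left _ two_ne_zero]
end

section
/- Let τ = (1 4)(2 5)(3 6)(7 10)(8 11)(9 12), σ₁ = (1 2 3)(4 7 12)(5 8 10)(6 9 11), σ₂ = (1 2 3)(4 7 12)(5 8 10)(6 11 9) and σ₃ = (1 2 3)(4 12 7)(5 10 8)(6 11 9) be permutations of {1, …, 12}. Then the three pairs (σ₁, τ), (σ₂, τ), (σ₃, τ) are pairwise non-simultaneously-conjugate: for i ≠ j there is no permutation η of Fin 12 with η σᵢ η⁻¹ = σⱼ and η τ η⁻¹ = τ. (Hence there are at least three non-isomorphic dessins d'enfants whose underlying bipartite graph is the clean bipartite graph A₄ of the tetrahedron; in fact these three exhaust all of them up to isomorphism.) -/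
open Equiv

set_option maxRecDepth 100000 in
theorem stmt15 :
    let τ : Equiv.Perm (Fin 12) := c[0, 3] * c[1, 4] * c[2, 5] * c[6, 9] * c[7, 10] * c[8, 11]
    let σs : Fin 3 → Equiv.Perm (Fin 12) :=
      ![c[0, 1, 2] * c[3, 6, 11] * c[4, 7, 9] * c[5, 8, 10],
        c[0, 1, 2] * c[3, 6, 11] * c[4, 7, 9] * c[5, 10, 8],
        c[0, 1, 2] * c[3, 11, 6] * c[4, 9, 7] * c[5, 10, 8]]
    ∀ i j : Fin 3, i ≠ j →
      ¬ ∃ η : Equiv.Perm (Fin 12), η * σs i * η⁻¹ = σs j ∧ η * τ * η⁻¹ = τ := by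
  intro τ σs i j hij ⟨η, h1, h2⟩
  have hprod : σs j * τ = η * (σs i * τ) * η⁻¹ := by
    conv_lhs => rw [← h1, ← h2]
    simp only [mul_assoc, inv_mul_cancel_left]
  have key : ∀ n : ℕ, (σs j * τ) ^ n = 1 ↔ (σs i * τ) ^ n = 1 := by
    intro n
    rw [hprod, conj_pow]
    constructor
    · intro h
      have := congrArg (fun x => η⁻¹ * x * η) h
      simpa [mul_assoc] using this
    · intro h; rw [h]; simp
  fin_cases i <;> fin_cases j <;>
    first
      | exact absurd rfl hij
      | exact absurd ((key 3).mp (by decide)) (by decide)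
      | exact absurd ((key 8).mp (by decide)) (by decide)
      | exact absurd ((key 9).mp (by decide)) (by decide)
      | exact absurd ((key 3).mpr (by decide)) (by decide)
end

section
/- In the symmetric group of permutations of the 18-element set {1, …, 18}, the subgroup generated by σ₁ = (1 2 3)(4 5 6)(7 8 9)(10 11 12)(13 14 15)(16 17 18) and τ = (1 12)(2 15)(3 18)(4 11)(5 14)(6 17)(9 16)(7 10)(8 13) is isomorphic to the direct product (ZMod 3) × S₃ of a cyclic group of order 3 and the symmetric group on 3 letters (so it has order 18), and it acts transitively on Fin 18 (hence the corresponding genus-one dessin d'enfant, whose underlying bipartite graph is the clean bipartite graph of K₍₃,₃₎ and which lives on the Fermat cubic x³ + y³ + z³ = 0, is regular). -/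
open Equiv

set_option maxRecDepth 10000
set_option maxHeartbeats 2000000

private def sg : Equiv.Perm (Fin 18) :=
  ⟨![1, 2, 0, 4, 5, 3, 7, 8, 6, 10, 11, 9, 13, 14, 12, 16, 17, 15],
   ![2, 0, 1, 5, 3, 4, 8, 6, 7, 11, 9, 10, 14, 12, 13, 17, 15, 16],
   by decide, by decide⟩

private def tg : Equiv.Perm (Fin 18) :=
  ⟨![11, 14, 17, 10, 13, 16, 9, 12, 15, 6, 3, 0, 7, 4, 1, 8, 5, 2],
   ![11, 14, 17, 10, 13, 16, 9, 12, 15, 6, 3, 0, 7, 4, 1, 8, 5, 2],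
   by decide, by decide⟩

private def zed : Equiv.Perm (Fin 18) := sg * tg * sg * tg

private def ae : Equiv.Perm (Fin 18) := sg * sg * tg * sg * tg

private def sfun : Equiv.Perm (Fin 3) → Equiv.Perm (Fin 18) := fun s =>
  ae ^ (if s = 1 then 0 else if s = c[0, 1, 2] then 1 else if s = c[0, 2, 1] then 2
        else if s = Equiv.swap 0 1 then 0 else if s = Equiv.swap 0 2 then 1 else 2) *
  tg ^ (if s = 1 then 0 else if s = c[0, 1, 2] then 0 else if s = c[0, 2, 1] then 0
        else 1)

private def shom : Equiv.Perm (Fin 3) →* Equiv.Perm (Fin 18) :=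
  MonoidHom.mk' sfun (by decide)

private def zhom : Multiplicative (ZMod 3) →* Equiv.Perm (Fin 18) :=
  MonoidHom.mk' (fun x => zed ^ (Multiplicative.toAdd x).val) (by decide)

private theorem hcomm : ∀ (m : Multiplicative (ZMod 3)) (n : Equiv.Perm (Fin 3)),
    zhom m * shom n = shom n * zhom m := by decide

private theorem sg_eq :
    (c[0, 1, 2] * c[3, 4, 5] * c[6, 7, 8] * c[9, 10, 11] * c[12, 13, 14] * c[15, 16, 17] :
      Equiv.Perm (Fin 18)) = sg := by decide

private theorem tg_eq :
    (c[0, 11] * c[1, 14] * c[2, 17] * c[3, 10] * c[4, 13] * c[5, 16] * c[8, 15] * c[6, 9] *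
      c[7, 12] : Equiv.Perm (Fin 18)) = tg := by decide

private def phi : Multiplicative (ZMod 3) × Equiv.Perm (Fin 3) →* Equiv.Perm (Fin 18) :=
  zhom.noncommCoprod shom (fun m n => hcomm m n)

theorem stmt18 :
    let σ₁ : Equiv.Perm (Fin 18) :=
      c[0, 1, 2] * c[3, 4, 5] * c[6, 7, 8] * c[9, 10, 11] * c[12, 13, 14] * c[15, 16, 17]
    let τ : Equiv.Perm (Fin 18) :=
      c[0, 11] * c[1, 14] * c[2, 17] * c[3, 10] * c[4, 13] * c[5, 16] * c[8, 15] * c[6, 9] *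
        c[7, 12]
    let H := Subgroup.closure ({σ₁, τ} : Set (Equiv.Perm (Fin 18)))
    Nonempty (H ≃* Multiplicative (ZMod 3) × Equiv.Perm (Fin 3)) ∧ Nat.card H = 18 ∧
      ∀ k k' : Fin 18, ∃ g ∈ H, g k = k' := by
  intro σ₁ τ H
  have hσe : σ₁ = sg := sg_eq
  have hτe : τ = tg := tg_eq
  have hσ : sg ∈ H := hσe ▸ Subgroup.subset_closure (Set.mem_insert _ _)
  have hτ : tg ∈ H := hτe ▸ Subgroup.subset_closure (Set.mem_insert_of_mem _ rfl)
  have hz : zed ∈ H := mul_mem (mul_mem (mul_mem hσ hτ) hσ) hτ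
  have ha : ae ∈ H := mul_mem (mul_mem (mul_mem (mul_mem hσ hσ) hτ) hσ) hτ
  have hφmem : ∀ x, phi x ∈ H := by
    rintro ⟨m, s⟩
    have h1 : zhom m ∈ H := pow_mem hz _
    have h2 : shom s ∈ H := mul_mem (pow_mem ha _) (pow_mem hτ _)
    exact mul_mem h1 h2
  have hrange : phi.range = H := by
    apply le_antisymm
    · rintro _ ⟨x, rfl⟩
      exact hφmem x
    · apply (Subgroup.closure_le _).mpr
      rintro x (rfl | rfl)
      · exact ⟨(Multiplicative.ofAdd 2, c[0, 1, 2]), by rw [hσe]; decide⟩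
      · exact ⟨(1, Equiv.swap 0 1), by rw [hτe]; decide⟩
  have hinj : Function.Injective phi :=
    (injective_iff_map_eq_one phi).mpr (by decide)
  have e : (Multiplicative (ZMod 3) × Equiv.Perm (Fin 3)) ≃* H :=
    (MonoidHom.ofInjective hinj).trans (MulEquiv.subgroupCongr hrange)
  refine ⟨⟨e.symm⟩, ?_, ?_⟩
  · rw [Nat.card_congr e.symm.toEquiv]
    simp [Nat.card_eq_fintype_card, Fintype.card_perm, Nat.factorial]
  · have htr : ∀ k : Fin 18, ∃ x : Multiplicative (ZMod 3) × Equiv.Perm (Fin 3),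
        phi x 0 = k := by decide
    intro k k'
    obtain ⟨x, hx⟩ := htr k
    obtain ⟨y, hy⟩ := htr k'
    refine ⟨phi y * (phi x)⁻¹, mul_mem (hφmem y) (inv_mem (hφmem x)), ?_⟩
    have h0 : (phi x)⁻¹ k = 0 := by
      rw [← hx]
      simp
    rw [Equiv.Perm.mul_apply, h0, hy]
end
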